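/- Let A be a Q(q)-algebra, x, y ∈ A satisfying x² y − [2]_q x y x + y x² = 0. Then for every m ≥ 2 and e ∈ {±1}: ∑_{r+s=m} (−1)^r q^{e r (2−m)} x^{(r)} y x^{(s)} = 0, where x^{(k)} = x^k/[k]_q!. -/

import Mathlib

noncomputable section

abbrev K : Type := RatFunc ℚ

/-- The indeterminate `q` in `ℚ(q)`. -/
def qq : K := RatFunc.X

/-- Balanced quantum integer at base `x`. -/
def qintx (x : K) (m : ℤ) : K := (x ^ m - x ^ (-m)) / (x - x⁻¹)

/-- Balanced quantum integer `[m]_q`. -/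
def qint (m : ℤ) : K := qintx qq m

/-- Quantum factorial at base `x`. -/
def qfactx (x : K) (m : ℕ) : K := ∏ j ∈ Finset.range m, qintx x ((j : ℤ) + 1)

/-- Quantum factorial `[m]_q!`. -/
def qfact (m : ℕ) : K := qfactx qq m

/-- Gaussian binomial coefficient at base `x` (zero when `r > m`). -/
def qbinomx (x : K) (m r : ℕ) : K :=
  if r ≤ m then qfactx x m / (qfactx x r * qfactx x (m - r)) else 0

/-- Gaussian binomial coefficient. -/
def qbinom (m r : ℕ) : K := qbinomx qq m r

/-- The ı-divided powers `B^{(m)}_{p̄}` of `B` with central parameter `Z`,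
given by the closed product formulas of the paper. -/
def iDP {A : Type*} [Ring A] [Algebra K A] (B Z : A) (p : ZMod 2) (m : ℕ) : A :=
  (qfact m)⁻¹ •
    ((if m % 2 = 1 then B else 1) *
      ((List.range (m / 2)).map (fun j =>
        B ^ 2 -
          ((qint (if p = 1 then 2 * (j : ℤ) + 1
                  else if m % 2 = 1 then 2 * (j : ℤ) + 2 else 2 * (j : ℤ))) ^ 2 * qq) • Z)).prod)

/-- The usual divided power `x^{(k)} = x^k/[k]_q!`. -/
def dp {A : Type*} [Ring A] [Algebra K A] (x : A) (k : ℕ) : A := (qfact k)⁻¹ • x ^ k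

lemma qq_ne_zero : qq ≠ 0 := RatFunc.X_ne_zero

lemma qq_pow_ne_one (k : ℕ) (hk : k ≠ 0) : qq ^ k ≠ 1 := by
  intro hc
  have h1 : (algebraMap (Polynomial ℚ) K) (Polynomial.X ^ k) = (algebraMap (Polynomial ℚ) K) 1 := by
    simpa [qq, map_pow, RatFunc.algebraMap_X] using hc
  have := RatFunc.algebraMap_injective ℚ h1
  have := congrArg Polynomial.natDegree this
  rw [Polynomial.natDegree_X_pow, Polynomial.natDegree_one] at this
  exact hk this

lemma qq_zpow_ne_one (n : ℤ) (hn : n ≠ 0) : qq ^ n ≠ 1 := by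
  rcases n with k | k
  · simpa using qq_pow_ne_one k (by simpa using hn)
  · intro hc
    rw [zpow_negSucc, inv_eq_one] at hc
    exact qq_pow_ne_one (k+1) (Nat.succ_ne_zero k) hc

lemma qsub_ne : qq - qq⁻¹ ≠ 0 := by
  intro hc
  have h2 : qq * qq = qq * qq⁻¹ := by rw [sub_eq_zero] at hc; rw [← hc]
  rw [mul_inv_cancel₀ qq_ne_zero] at h2
  exact qq_pow_ne_one 2 (by norm_num) (by rw [pow_two]; exact h2)

lemma qint_ne_zero (n : ℤ) (hn : n ≠ 0) : qint n ≠ 0 := by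
  unfold qint qintx
  apply div_ne_zero _ qsub_ne
  intro hc
  rw [sub_eq_zero] at hc
  have : qq ^ (2*n) = 1 := by
    rw [two_mul, zpow_add₀ qq_ne_zero]
    nth_rewrite 2 [hc]
    rw [← zpow_add₀ qq_ne_zero, add_neg_cancel, zpow_zero]
  exact qq_zpow_ne_one (2*n) (by omega) this

lemma qint_zero : qint 0 = 0 := by unfold qint qintx; norm_num

lemma qint_one : qint 1 = 1 := by
  unfold qint qintx
  rw [zpow_one]
  norm_num [zpow_neg, zpow_one]
  exact qsub_ne

lemma key_scalar (R M e : ℤ) (he : e = 1 ∨ e = -1) :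
    -(qq ^ (e*(R-1)*(2-M)) * qint R)
      = qq ^ (e*(2*M-1)) * (qq ^ (e*R*(2-M)) * qint (M+1-R))
        - qq ^ (e*(2*M-1)) * qint (M+1) * qq ^ (e*R*(1-M)) := by
  unfold qint qintx
  rcases he with he | he <;> subst he <;>
  · have zz : ∀ a b : ℤ, qq ^ a * qq ^ b = qq ^ (a+b) := fun a b => (zpow_add₀ qq_ne_zero a b).symm
    simp only [div_eq_mul_inv, ← zpow_neg, mul_sub, sub_mul, neg_mul, mul_neg, mul_assoc,
      mul_comm, mul_left_comm, zz]
    ring_nf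
    have zz' : ∀ (a b : ℤ) (u : K), qq ^ a * (u * qq ^ b) = u * qq ^ (a+b) := by
      intro a b u; rw [mul_left_comm, zz]
    simp only [mul_assoc, zz, zz']
    ring_nf

lemma qfact_zero : qfact 0 = 1 := by unfold qfact qfactx; simp

lemma qfact_succ (k : ℕ) : qfact (k+1) = qfact k * qint ((k:ℤ)+1) := by
  unfold qfact qfactx qint
  rw [Finset.prod_range_succ]

lemma qfact_ne_zero (m : ℕ) : qfact m ≠ 0 := by
  induction m with
  | zero => rw [qfact_zero]; exact one_ne_zero
  | succ k ih =>
    rw [qfact_succ]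
    exact mul_ne_zero ih (qint_ne_zero _ (by omega))

lemma qfact_one : qfact 1 = 1 := by
  rw [qfact_succ 0, qfact_zero, one_mul]
  norm_num [qint_one]

lemma dp_zero {A : Type*} [Ring A] [Algebra K A] (x : A) : dp x 0 = 1 := by
  simp [dp, qfact_zero]

lemma dp_one {A : Type*} [Ring A] [Algebra K A] (x : A) : dp x 1 = x := by
  simp [dp, qfact_one]

lemma dp_two {A : Type*} [Ring A] [Algebra K A] (x : A) : dp x 2 = (qint 2)⁻¹ • x ^ 2 := by
  have h2 : qfact 2 = qint 2 := by
    rw [qfact_succ 1, qfact_one, one_mul]; norm_num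
  rw [dp, h2]

lemma mul_dp {A : Type*} [Ring A] [Algebra K A] (x : A) (k : ℕ) :
    x * dp x k = qint ((k:ℤ)+1) • dp x (k+1) := by
  unfold dp
  rw [mul_smul_comm, ← pow_succ', qfact_succ, smul_smul, mul_inv,
    mul_comm (qfact k)⁻¹ _, ← mul_assoc, mul_inv_cancel₀ (qint_ne_zero _ (by omega)), one_mul]

lemma dp_mul {A : Type*} [Ring A] [Algebra K A] (x : A) (k : ℕ) :
    dp x k * x = qint ((k:ℤ)+1) • dp x (k+1) := by
  unfold dp
  rw [smul_mul_assoc, ← pow_succ, qfact_succ, smul_smul, mul_inv,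
    mul_comm (qfact k)⁻¹ _, ← mul_assoc, mul_inv_cancel₀ (qint_ne_zero _ (by omega)), one_mul]


lemma serre_rec {A : Type*} [Ring A] [Algebra K A] (x y : A) (e : ℤ) (he : e = 1 ∨ e = -1) (m : ℕ) :
    x * (∑ r ∈ Finset.range (m + 1),
          ((-1 : K) ^ r * qq ^ (e * (r : ℤ) * (2 - (m : ℤ)))) • (dp x r * y * dp x (m - r)))
      = qq ^ (e * (2 * (m : ℤ) - 1)) •
          ((∑ r ∈ Finset.range (m + 1),
            ((-1 : K) ^ r * qq ^ (e * (r : ℤ) * (2 - (m : ℤ)))) • (dp x r * y * dp x (m - r))) * x)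
        - (qq ^ (e * (2 * (m : ℤ) - 1)) * qint ((m : ℤ) + 1)) •
          ∑ r ∈ Finset.range (m + 1 + 1),
            ((-1 : K) ^ r * qq ^ (e * (r : ℤ) * (2 - ((m : ℤ) + 1)))) • (dp x r * y * dp x (m + 1 - r)) := by
  have hA : x * (∑ r ∈ Finset.range (m + 1),
        ((-1 : K) ^ r * qq ^ (e * (r : ℤ) * (2 - (m : ℤ)))) • (dp x r * y * dp x (m - r)))
      = ∑ r ∈ Finset.range (m + 1 + 1),
          (((-1 : K) ^ (r+1) * qq ^ (e * ((r : ℤ) - 1) * (2 - (m : ℤ))) * qint (r : ℤ)) •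
            (dp x r * y * dp x (m + 1 - r))) := by
    rw [Finset.mul_sum]
    conv_rhs => rw [Finset.sum_range_succ']
    simp only [Nat.cast_zero, qint_zero, mul_zero, zero_smul, add_zero]
    apply Finset.sum_congr rfl
    intro r hr
    have hx : x * (dp x r * y * dp x (m - r)) = qint ((r:ℤ)+1) • (dp x (r+1) * y * dp x (m - r)) := by
      rw [← mul_assoc, ← mul_assoc, mul_dp, smul_mul_assoc, smul_mul_assoc]
    rw [mul_smul_comm, hx, smul_smul, Nat.add_sub_add_right]
    congr 1
    push_cast
    rw [show e * ((r:ℤ) + 1 - 1) * (2 - (m:ℤ)) = e * (r:ℤ) * (2 - (m:ℤ)) from by ring]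
    ring
  have hB : (∑ r ∈ Finset.range (m + 1),
        ((-1 : K) ^ r * qq ^ (e * (r : ℤ) * (2 - (m : ℤ)))) • (dp x r * y * dp x (m - r))) * x
      = ∑ r ∈ Finset.range (m + 1 + 1),
          (((-1 : K) ^ r * qq ^ (e * (r : ℤ) * (2 - (m : ℤ))) * qint ((m : ℤ) + 1 - (r : ℤ))) •
            (dp x r * y * dp x (m + 1 - r))) := by
    rw [Finset.sum_mul]
    conv_rhs => rw [Finset.sum_range_succ]
    have h0 : ((m : ℤ) + 1 - ((m + 1 : ℕ) : ℤ)) = 0 := by push_cast; ring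
    rw [h0]
    simp only [qint_zero, mul_zero, zero_smul, add_zero]
    apply Finset.sum_congr rfl
    intro r hr
    have hr' : r ≤ m := by simpa [Nat.lt_succ_iff] using hr
    have hx : (dp x r * y * dp x (m - r)) * x
        = qint (((m - r : ℕ):ℤ)+1) • (dp x r * y * dp x (m - r + 1)) := by
      rw [mul_assoc, dp_mul, mul_smul_comm]
    rw [smul_mul_assoc, hx, smul_smul, Nat.cast_sub hr',
      show (m:ℤ) - (r:ℤ) + 1 = (m:ℤ) + 1 - (r:ℤ) from by ring,
      show m - r + 1 = m + 1 - r from by omega, mul_assoc]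
  rw [hA, hB, Finset.smul_sum, Finset.smul_sum, ← Finset.sum_sub_distrib]
  apply Finset.sum_congr rfl
  intro r hr
  rw [smul_smul, smul_smul, ← sub_smul]
  congr 1
  have hk := key_scalar (r : ℤ) (m : ℤ) e he
  rw [show e * (r:ℤ) * (2 - ((m:ℤ) + 1)) = e * (r:ℤ) * (1 - (m:ℤ)) from by ring]
  linear_combination ((-1 : K) ^ r) * hk

theorem stmt6 {A : Type*} [Ring A] [Algebra K A] (x y : A)
    (h : x ^ 2 * y - qint 2 • (x * y * x) + y * x ^ 2 = 0)
    (m : ℕ) (hm : 2 ≤ m) (e : ℤ) (he : e = 1 ∨ e = -1) :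
    ∑ r ∈ Finset.range (m + 1),
      ((-1 : K) ^ r * qq ^ (e * (r : ℤ) * (2 - (m : ℤ)))) • (dp x r * y * dp x (m - r)) = 0 := by
  induction m, hm using Nat.le_induction with
  | base =>
    rw [Finset.sum_range_succ, Finset.sum_range_succ, Finset.sum_range_one]
    norm_num [dp_zero, dp_one, dp_two]
    have key : (qint 2)⁻¹ • (x ^ 2 * y + y * x ^ 2) = x * y * x := by
      have h2 : x ^ 2 * y + y * x ^ 2 = qint 2 • (x * y * x) := by
        have := h
        rw [sub_add_eq_add_sub, sub_eq_zero] at this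
        exact this
      rw [h2, smul_smul, inv_mul_cancel₀ (qint_ne_zero 2 (by norm_num)), one_smul]
    rw [smul_add] at key
    rw [← key]
    abel
  | succ n hn ih =>
    have hrec := serre_rec x y e he n
    rw [ih, mul_zero, zero_mul, smul_zero, zero_sub] at hrec
    have h2 : (qq ^ (e * (2 * (n : ℤ) - 1)) * qint ((n : ℤ) + 1)) •
        (∑ r ∈ Finset.range (n + 1 + 1),
          ((-1 : K) ^ r * qq ^ (e * (r : ℤ) * (2 - ((n : ℤ) + 1)))) • (dp x r * y * dp x (n + 1 - r))) = 0 := by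
      rw [← neg_eq_zero, ← hrec]
    rw [smul_eq_zero] at h2
    rcases h2 with h2 | h2
    · exact absurd h2 (mul_ne_zero (zpow_ne_zero _ qq_ne_zero) (qint_ne_zero _ (by omega)))
    · push_cast
      exact h2
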